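/- arXiv:2410.08579 — 3 statements merged into one kernel-verified Lean document; each statement's English description precedes it below -/
import Mathlib

section
/- Let f be an analytic diffeomorphism of a polydisk U = o_K^m arising as the time-1 map of an analytic flow Φ: o_K × U → U (with Φ^n = f^n for all n ∈ Z). If a point y ∈ U satisfies f^k(y) = y for some k ≥ 1, then f(y) = y. That is, every periodic point of such an f is fixed. -/
open Filter

private lemma ultra_norm_tsum_le {K : Type*} [NormedField K] [CompleteSpace K]
    [IsUltrametricDist K] {ι : Type*} {f : ι → K} {C : ℝ} (h0 : 0 ≤ C)
    (h : ∀ i, ‖f i‖ ≤ C) : ‖∑' i, f i‖ ≤ C := by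
  by_cases hs : Summable f
  · apply le_of_tendsto ((continuous_norm.tendsto _).comp hs.hasSum)
    filter_upwards with s using
      IsUltrametricDist.norm_sum_le_of_forall_le_of_nonneg h0 (fun i _ => h i)
  · simp [tsum_eq_zero_of_not_summable hs, h0]


private lemma tate_coeffs_zero {K : Type*} [NontriviallyNormedField K] [CompleteSpace K]
    (d : ℕ → K) (C : ℝ) (hC : ∀ n, ‖d n‖ ≤ C)
    (t : ℕ → K) (htne : ∀ j, t j ≠ 0) (htzero : Tendsto t atTop (nhds 0))
    (hzero : ∀ j, (∑' n, d n * t j ^ n) = 0) : ∀ n, d n = 0 := by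
  set P : FormalMultilinearSeries K K K := FormalMultilinearSeries.ofScalars K d with hP
  have hrad : 0 < P.radius := by
    have h1 : (1 : NNReal) ≤ P.radius := by
      apply P.le_radius_of_bound (max C 1)
      intro n
      rw [NNReal.coe_one, one_pow, mul_one, hP]
      rw [FormalMultilinearSeries.ofScalars_norm]
      exact le_trans (hC n) (le_max_left _ _)
    exact lt_of_lt_of_le (by norm_num) h1
  have hFsum : ∀ s : K, P.sum s = ∑' n, d n * s ^ n := by
    intro s
    apply tsum_congr
    intro n
    rw [hP, FormalMultilinearSeries.ofScalars_apply_eq, smul_eq_mul]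
  have hball := P.hasFPowerSeriesOnBall hrad
  have hfreq : ∃ᶠ z in nhdsWithin 0 {(0 : K)}ᶜ, P.sum z = 0 := by
    have htt : Tendsto t atTop (nhdsWithin 0 {(0 : K)}ᶜ) := by
      apply tendsto_nhdsWithin_iff.2
      exact ⟨htzero, Filter.Eventually.of_forall fun j => htne j⟩
    exact htt.frequently (Filter.Frequently.of_forall fun j => by
      rw [hFsum]; exact hzero j)
  have han : AnalyticAt K P.sum 0 := hball.analyticAt
  have hev : ∀ᶠ z in nhds 0, P.sum z = 0 :=
    han.frequently_zero_iff_eventually_zero.1 hfreq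
  have hPz : HasFPowerSeriesAt (0 : K → K) P 0 :=
    hball.hasFPowerSeriesAt.congr (by filter_upwards [hev] with z hz using hz)
  have hd0 : d = 0 := by
    have := hPz.eq_zero
    rwa [hP, FormalMultilinearSeries.ofScalars_series_eq_zero] at this
  intro n
  exact congrFun hd0 n

private theorem stmt8' (p : ℕ) [Fact p.Prime]
    {K : Type*} [NontriviallyNormedField K] [CompleteSpace K] [IsUltrametricDist K]
    [Algebra ℚ_[p] K] [FiniteDimensional ℚ_[p] K]
    (hKnorm : ∀ x : ℚ_[p], ‖algebraMap ℚ_[p] K x‖ = ‖x‖)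
    (m : ℕ)
    (e : ℕ × (Fin m → ℕ) → Fin m → K)
    (he1 : ∀ q i, ‖e q i‖ ≤ 1)
    (hedecay : ∀ i,
      Tendsto (fun q : ℕ × (Fin m → ℕ) => ‖e q i‖) cofinite (nhds 0))
    (Φ : K → (Fin m → K) → Fin m → K)
    (hΦ : ∀ t x i, Φ t x i
      = ∑' q : ℕ × (Fin m → ℕ), t ^ q.1 * (e q i * ∏ j, x j ^ q.2 j))
    (hstab : ∀ t x, ‖t‖ ≤ 1 → (∀ j, ‖x j‖ ≤ 1) → ∀ i, ‖Φ t x i‖ ≤ 1)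
    (hflow : ∀ s t x, ‖s‖ ≤ 1 → ‖t‖ ≤ 1 → (∀ j, ‖x j‖ ≤ 1) →
        Φ (s + t) x = Φ s (Φ t x))
    (f : (Fin m → K) → Fin m → K) (hfdef : f = Φ 1)
    (hiter : ∀ n : ℕ, ∀ x, (∀ j, ‖x j‖ ≤ 1) → Φ (n : K) x = f^[n] x) :
    ∀ y : Fin m → K, (∀ j, ‖y j‖ ≤ 1) →
      ∀ k : ℕ, 1 ≤ k → f^[k] y = y → f y = y := by
  intro y hy k hk hper
  have hchar : CharZero K := charZero_of_injective_algebraMap (algebraMap ℚ_[p] K).injective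
  -- norms of naturals
  have hnat : ∀ n : ℕ, ‖(n : K)‖ = ‖(n : ℚ_[p])‖ := by
    intro n
    rw [← hKnorm (n : ℚ_[p]), map_natCast]
  have hnat1 : ∀ n : ℕ, ‖(n : K)‖ ≤ 1 := by
    intro n
    rw [hnat]
    exact_mod_cast Padic.norm_int_le_one (n : ℤ)
  -- the periodic points
  set t : ℕ → K := fun j => ((k * p ^ j : ℕ) : K) with ht
  have htne : ∀ j, t j ≠ 0 := by
    intro j
    simp only [ht, Ne, Nat.cast_eq_zero]
    exact Nat.mul_ne_zero (Nat.one_le_iff_ne_zero.mp hk)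
      (pow_ne_zero _ (Nat.Prime.ne_zero Fact.out))
  have htzero : Tendsto t atTop (nhds 0) := by
    have hb : ∀ j, ‖t j‖ ≤ ((p : ℝ)⁻¹) ^ j := by
      intro j
      have h1 : t j = (k : K) * ((p : K)) ^ j := by push_cast [ht]; ring
      rw [h1, norm_mul, norm_pow]
      have hp : ‖(p : K)‖ = (p : ℝ)⁻¹ := by
        rw [hnat]; exact_mod_cast Padic.norm_p
      rw [hp]
      calc ‖(k : K)‖ * ((p:ℝ)⁻¹) ^ j ≤ 1 * ((p:ℝ)⁻¹) ^ j := by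
            apply mul_le_mul_of_nonneg_right (hnat1 k) (by positivity)
        _ = ((p:ℝ)⁻¹) ^ j := one_mul _
    refine squeeze_zero_norm hb ?_
    apply tendsto_pow_atTop_nhds_zero_of_lt_one (by positivity)
    rw [inv_lt_one_iff₀]
    right
    exact_mod_cast (Fact.out : p.Prime).one_lt
  have htfix : ∀ j, Φ (t j) y = y := by
    intro j
    rw [ht, hiter _ _ hy, Function.iterate_mul, Function.iterate_fixed hper]
  -- per coordinate
  have key : ∀ i, Φ 1 y i = y i := by
    intro i
    set c : ℕ → K := fun n => ∑' α : Fin m → ℕ, e (n, α) i * ∏ j, y j ^ α j with hc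
    have hterm : ∀ (s : K), ‖s‖ ≤ 1 → ∀ q : ℕ × (Fin m → ℕ),
        ‖s ^ q.1 * (e q i * ∏ j, y j ^ q.2 j)‖ ≤ ‖e q i‖ := by
      intro s hs q
      rw [norm_mul, norm_mul]
      calc ‖s ^ q.1‖ * (‖e q i‖ * ‖∏ j, y j ^ q.2 j‖)
          ≤ 1 * (‖e q i‖ * 1) := by
            apply mul_le_mul
            · rw [norm_pow]; exact pow_le_one₀ (norm_nonneg _) hs
            · apply mul_le_mul_of_nonneg_left _ (norm_nonneg _)
              rw [norm_prod]
              exact Finset.prod_le_one (fun _ _ => by positivity)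
                (fun j _ => by rw [norm_pow]; exact pow_le_one₀ (norm_nonneg _) (hy j))
            · positivity
            · norm_num
        _ = ‖e q i‖ := by ring
    have hsum : ∀ (s : K), ‖s‖ ≤ 1 →
        Summable (fun q : ℕ × (Fin m → ℕ) => s ^ q.1 * (e q i * ∏ j, y j ^ q.2 j)) := by
      intro s hs
      apply NonarchimedeanAddGroup.summable_of_tendsto_cofinite_zero
      apply squeeze_zero_norm (hterm s hs) (hedecay i)
    have hslice : ∀ (s : K) (n : ℕ),
        (∑' α : Fin m → ℕ, s ^ (n, α).1 * (e (n, α) i * ∏ j, y j ^ (n, α).2 j))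
          = c n * s ^ n := by
      intro s n
      rw [show (fun α : Fin m → ℕ =>
            s ^ (n, α).1 * (e (n, α) i * ∏ j, y j ^ (n, α).2 j))
          = fun α => s ^ n * (e (n, α) i * ∏ j, y j ^ α j) from rfl]
      rw [tsum_mul_left, hc, mul_comm]
    have hrep : ∀ (s : K), ‖s‖ ≤ 1 → Φ s y i = ∑' n, c n * s ^ n := by
      intro s hs
      rw [hΦ, Summable.tsum_prod (hsum s hs)]
      exact tsum_congr fun n => hslice s n
    have hcsum : ∀ (s : K), ‖s‖ ≤ 1 → Summable (fun n => c n * s ^ n) := by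
      intro s hs
      exact ((hsum s hs).prod).congr fun n => hslice s n
    have hc1 : ∀ n, ‖c n‖ ≤ 1 := by
      intro n
      apply ultra_norm_tsum_le zero_le_one
      intro α
      have := hterm 1 (by simp) (n, α)
      simpa using le_trans (le_of_eq (by simp)) (this.trans (he1 _ _))
    -- the shifted coefficient sequence
    set d : ℕ → K := fun n => if n = 0 then c 0 - y i else c n with hd
    have hdbound : ∀ n, ‖d n‖ ≤ max 1 ‖c 0 - y i‖ := by
      intro n
      simp only [hd]
      split_ifs
      · exact le_max_right _ _
      · exact le_trans (hc1 n) (le_max_left _ _)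
    have hval : ∀ (s : K), ‖s‖ ≤ 1 → (∑' n, d n * s ^ n) = Φ s y i - y i := by
      intro s hs
      rw [hrep s hs]
      have hsingle : Summable (fun n => (if n = 0 then y i else 0) * s ^ n) :=
        summable_of_finite_support (by
          apply Set.Finite.subset (Set.finite_singleton 0)
          intro n hn
          simp only [Function.mem_support] at hn
          by_contra h
          simp only [Set.mem_singleton_iff] at h
          simp [h] at hn)
      have heq : (fun n => d n * s ^ n)
          = fun n => c n * s ^ n - (if n = 0 then y i else 0) * s ^ n := by
        funext n
        simp only [hd]
        by_cases h : n = 0 <;> simp [h] <;> ring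
      rw [heq, Summable.tsum_sub (hcsum s hs) hsingle]
      congr 1
      rw [tsum_eq_single 0 (by intro n hn; simp [hn])]
      simp
    have hzero : ∀ j, (∑' n, d n * t j ^ n) = 0 := by
      intro j
      rw [hval _ (hnat1 _), htfix j]
      ring
    have hd0 : ∀ n, d n = 0 := by
      apply tate_coeffs_zero d (max 1 ‖c 0 - y i‖) hdbound _ htne htzero hzero
    have hc0 : c 0 = y i := by
      have := hd0 0
      simp only [hd, if_pos rfl] at this
      exact sub_eq_zero.mp this
    have hcn : ∀ n, n ≠ 0 → c n = 0 := by
      intro n hn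
      have := hd0 n
      simpa [hd, hn] using this
    rw [hrep 1 (by simp)]
    rw [tsum_eq_single 0 (by intro n hn; simp [hcn n hn])]
    simp [hc0]
  rw [hfdef]
  funext i
  exact key i

theorem stmt8 (p : ℕ) [Fact p.Prime]
    {K : Type*} [NormedField K] [CompleteSpace K] [IsUltrametricDist K]
    [Algebra ℚ_[p] K] [FiniteDimensional ℚ_[p] K]
    (hKnorm : ∀ x : ℚ_[p], ‖algebraMap ℚ_[p] K x‖ = ‖x‖)
    (m : ℕ)
    (e : ℕ × (Fin m → ℕ) → Fin m → K)
    (he1 : ∀ q i, ‖e q i‖ ≤ 1)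
    (hedecay : ∀ i,
      Tendsto (fun q : ℕ × (Fin m → ℕ) => ‖e q i‖) cofinite (nhds 0))
    (Φ : K → (Fin m → K) → Fin m → K)
    (hΦ : ∀ t x i, Φ t x i
      = ∑' q : ℕ × (Fin m → ℕ), t ^ q.1 * (e q i * ∏ j, x j ^ q.2 j))
    (hstab : ∀ t x, ‖t‖ ≤ 1 → (∀ j, ‖x j‖ ≤ 1) → ∀ i, ‖Φ t x i‖ ≤ 1)
    (hflow : ∀ s t x, ‖s‖ ≤ 1 → ‖t‖ ≤ 1 → (∀ j, ‖x j‖ ≤ 1) →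
        Φ (s + t) x = Φ s (Φ t x))
    (f : (Fin m → K) → Fin m → K) (hfdef : f = Φ 1)
    (hiter : ∀ n : ℕ, ∀ x, (∀ j, ‖x j‖ ≤ 1) → Φ (n : K) x = f^[n] x) :
    ∀ y : Fin m → K, (∀ j, ‖y j‖ ≤ 1) →
      ∀ k : ℕ, 1 ≤ k → f^[k] y = y → f y = y := by
  letI : NontriviallyNormedField K := by
    refine { ‹NormedField K› with non_trivial := ?_ }
    refine ⟨algebraMap ℚ_[p] K ((p : ℚ_[p]))⁻¹, ?_⟩
    rw [hKnorm, norm_inv, Padic.norm_p, inv_inv]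
    exact_mod_cast (Fact.out : p.Prime).one_lt
  exact stmt8' p hKnorm m e he1 hedecay Φ hΦ hstab hflow f hfdef hiter
end

section
/- Let Γ₀ be a subgroup of SL_2(Z_p) whose closure in SL_2(Z_p) is open. Then for every u ∈ Z_p^2 \ {0}, the closure of the orbit Γ₀·u in Z_p^2 is open. -/
open Matrix

variable {p : ℕ} [Fact p.Prime]

lemma dvd_of_norm_le {x y : ℤ_[p]} (hx : x ≠ 0) (h : ‖y‖ ≤ ‖x‖) : x ∣ y := by
  have hspec := PadicInt.unitCoeff_spec hx
  have hnx : ‖x‖ = (p:ℝ) ^ (-(x.valuation : ℤ)) := by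
    rw [PadicInt.norm_eq_zpow_neg_valuation hx]
  have h2 : ‖y‖ ≤ (p:ℝ) ^ (-(x.valuation : ℤ)) := hnx ▸ h
  rw [PadicInt.norm_le_pow_iff_mem_span_pow, Ideal.mem_span_singleton] at h2
  obtain ⟨c, hc⟩ := h2
  refine ⟨((PadicInt.unitCoeff hx)⁻¹ : ℤ_[p]ˣ) * c, ?_⟩
  have hui : ((PadicInt.unitCoeff hx : ℤ_[p]) * ((PadicInt.unitCoeff hx)⁻¹ : ℤ_[p]ˣ)) = 1 := by
    exact_mod_cast (PadicInt.unitCoeff hx).mul_inv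
  calc y = (p:ℤ_[p]) ^ x.valuation * c := hc
    _ = ((PadicInt.unitCoeff hx : ℤ_[p]) * ((PadicInt.unitCoeff hx)⁻¹ : ℤ_[p]ˣ))
          * ((p:ℤ_[p]) ^ x.valuation * c) := by rw [hui, one_mul]
    _ = ((PadicInt.unitCoeff hx : ℤ_[p]) * (p:ℤ_[p]) ^ x.valuation)
          * (((PadicInt.unitCoeff hx)⁻¹ : ℤ_[p]ˣ) * c) := by ring
    _ = x * (((PadicInt.unitCoeff hx)⁻¹ : ℤ_[p]ˣ) * c) := by rw [← hspec]

lemma pn_norm_le {n : ℕ} (x : ℤ_[p]) : ‖(p:ℤ_[p])^n * x‖ ≤ (p:ℝ)^(-(n:ℤ)) := by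
  rw [norm_mul, PadicInt.norm_p_pow]
  calc (p:ℝ)^(-(n:ℤ)) * ‖x‖ ≤ (p:ℝ)^(-(n:ℤ)) * 1 := by
        have : (0:ℝ) ≤ (p:ℝ)^(-(n:ℤ)) := by positivity
        exact mul_le_mul_of_nonneg_left (PadicInt.norm_le_one x) this
    _ = _ := mul_one _

lemma unit_of_small {n : ℕ} (hn : 1 ≤ n) (c : ℤ_[p]) : IsUnit (1 + (p:ℤ_[p])^n * c) := by
  rw [PadicInt.isUnit_iff]
  have hp1 : (1:ℝ) ≤ p := by exact_mod_cast (Fact.out : p.Prime).one_lt.le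
  have hsmall : ‖(p:ℤ_[p])^n * c‖ < 1 := by
    refine lt_of_le_of_lt (pn_norm_le c) ?_
    calc (p:ℝ)^(-(n:ℤ)) ≤ (p:ℝ)^(-(1:ℤ)) := by
          apply zpow_le_zpow_right₀ hp1; omega
      _ < 1 := by
          rw [_root_.zpow_neg, zpow_one]
          exact inv_lt_one_of_one_lt₀ (by exact_mod_cast (Fact.out : p.Prime).one_lt)
  have hle : ‖1 + (p:ℤ_[p])^n * c‖ ≤ 1 := PadicInt.norm_le_one _
  have hge : (1:ℝ) ≤ ‖1 + (p:ℤ_[p])^n * c‖ := by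
    have h1 : (1:ℤ_[p]) = (1 + (p:ℤ_[p])^n * c) + (-((p:ℤ_[p])^n * c)) := by ring
    have h2 : (1:ℝ) ≤ max ‖1 + (p:ℤ_[p])^n * c‖ ‖-((p:ℤ_[p])^n * c)‖ := by
      calc (1:ℝ) = ‖(1:ℤ_[p])‖ := by simp
        _ = ‖(1 + (p:ℤ_[p])^n * c) + (-((p:ℤ_[p])^n * c))‖ := by rw [← h1]
        _ ≤ _ := PadicInt.nonarchimedean _ _
    rcases max_cases ‖1 + (p:ℤ_[p])^n * c‖ ‖-((p:ℤ_[p])^n * c)‖ with ⟨he,_⟩|⟨he,_⟩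
    · rwa [he] at h2
    · rw [he, norm_neg] at h2; linarith
  linarith

lemma build1 {n : ℕ} (hn : 1 ≤ n) (a b c₀ c₁ : ℤ_[p]) :
    ∃ g : Matrix.SpecialLinearGroup (Fin 2) ℤ_[p],
      (∀ i j, ‖(g : Matrix (Fin 2) (Fin 2) ℤ_[p]) i j - (1 : Matrix (Fin 2) (Fin 2) ℤ_[p]) i j‖
          ≤ (p:ℝ)^(-(n:ℤ))) ∧
      (g : Matrix (Fin 2) (Fin 2) ℤ_[p]).mulVec ![a, a*b]
        = ![a + (p:ℤ_[p])^n*a*c₀, a*b + (p:ℤ_[p])^n*a*c₁] := by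
  obtain ⟨u, hu⟩ := unit_of_small hn c₀
  set α : ℤ_[p] := 1 + (p:ℤ_[p])^n * c₀ with hα
  set i : ℤ_[p] := ((u⁻¹ : ℤ_[p]ˣ) : ℤ_[p]) with hi
  have hαi : α * i = 1 := by rw [← hu, hi]; exact_mod_cast u.mul_inv
  have him : i - 1 = (p:ℤ_[p])^n * (-(c₀ * i)) := by
    have h2 : i - α * i = (p:ℤ_[p])^n * (-(c₀ * i)) := by rw [hα]; ring
    rw [← h2, hαi]
  refine ⟨⟨!![α, 0; (p:ℤ_[p])^n*(b*i*c₀ + c₁), i], ?_⟩, ?_, ?_⟩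
  · rw [Matrix.det_fin_two_of]; simpa using hαi
  · intro j k
    fin_cases j <;> fin_cases k <;>
      simp only [Fin.mk_zero, Fin.mk_one, Fin.isValue, Matrix.cons_val', Matrix.cons_val_zero,
        Matrix.cons_val_one, Matrix.head_cons, Matrix.head_fin_const, Matrix.empty_val',
        Matrix.cons_val_fin_one, Matrix.of_apply, Matrix.one_apply, Matrix.one_apply_eq,
        if_true, reduceIte]
    · have h : α - 1 = (p:ℤ_[p])^n * c₀ := by rw [hα]; ring
      rw [h]; exact pn_norm_le _
    · rw [if_neg (by decide), sub_zero]; simpa using pn_norm_le (0:ℤ_[p])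
    · rw [if_neg (by decide), sub_zero]; exact pn_norm_le _
    · rw [him]; exact pn_norm_le _
  · funext j
    fin_cases j <;>
      simp only [Fin.mk_zero, Fin.mk_one, Fin.isValue, Matrix.mulVec, dotProduct,
        Fin.sum_univ_two, Matrix.cons_val', Matrix.cons_val_zero, Matrix.cons_val_one,
        Matrix.head_cons, Matrix.empty_val', Matrix.cons_val_fin_one, Matrix.head_fin_const,
        Matrix.of_apply]
    · rw [hα]; ring
    · linear_combination a*b*hαi

lemma build2 {n : ℕ} (hn : 1 ≤ n) (a b c₀ c₁ : ℤ_[p]) :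
    ∃ g : Matrix.SpecialLinearGroup (Fin 2) ℤ_[p],
      (∀ i j, ‖(g : Matrix (Fin 2) (Fin 2) ℤ_[p]) i j - (1 : Matrix (Fin 2) (Fin 2) ℤ_[p]) i j‖
          ≤ (p:ℝ)^(-(n:ℤ))) ∧
      (g : Matrix (Fin 2) (Fin 2) ℤ_[p]).mulVec ![a*b, a]
        = ![a*b + (p:ℤ_[p])^n*a*c₀, a + (p:ℤ_[p])^n*a*c₁] := by
  obtain ⟨u, hu⟩ := unit_of_small hn c₁
  set α : ℤ_[p] := 1 + (p:ℤ_[p])^n * c₁ with hα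
  set i : ℤ_[p] := ((u⁻¹ : ℤ_[p]ˣ) : ℤ_[p]) with hi
  have hαi : α * i = 1 := by rw [← hu, hi]; exact_mod_cast u.mul_inv
  have him : i - 1 = (p:ℤ_[p])^n * (-(c₁ * i)) := by
    have h2 : i - α * i = (p:ℤ_[p])^n * (-(c₁ * i)) := by rw [hα]; ring
    rw [← h2, hαi]
  refine ⟨⟨!![i, (p:ℤ_[p])^n*(b*i*c₁ + c₀); 0, α], ?_⟩, ?_, ?_⟩
  · rw [Matrix.det_fin_two_of]; linear_combination hαi
  · intro j k
    fin_cases j <;> fin_cases k <;>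
      simp only [Fin.mk_zero, Fin.mk_one, Fin.isValue, Matrix.cons_val', Matrix.cons_val_zero,
        Matrix.cons_val_one, Matrix.head_cons, Matrix.head_fin_const, Matrix.empty_val',
        Matrix.cons_val_fin_one, Matrix.of_apply, Matrix.one_apply, Matrix.one_apply_eq,
        if_true, reduceIte]
    · rw [him]; exact pn_norm_le _
    · rw [if_neg (by decide), sub_zero]; exact pn_norm_le _
    · rw [if_neg (by decide), sub_zero]; simpa using pn_norm_le (0:ℤ_[p])
    · have h : α - 1 = (p:ℤ_[p])^n * c₁ := by rw [hα]; ring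
      rw [h]; exact pn_norm_le _
  · funext j
    fin_cases j <;>
      simp only [Fin.mk_zero, Fin.mk_one, Fin.isValue, Matrix.mulVec, dotProduct,
        Fin.sum_univ_two, Matrix.cons_val', Matrix.cons_val_zero, Matrix.cons_val_one,
        Matrix.head_cons, Matrix.empty_val', Matrix.cons_val_fin_one, Matrix.head_fin_const,
        Matrix.of_apply]
    · linear_combination a*b*hαi
    · rw [hα]; ring

lemma mulVec_norm_le (A : Matrix (Fin 2) (Fin 2) ℤ_[p]) (v : Fin 2 → ℤ_[p]) (i : Fin 2) :
    ‖A.mulVec v i‖ ≤ max ‖v 0‖ ‖v 1‖ := by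
  have h : A.mulVec v i = A i 0 * v 0 + A i 1 * v 1 := by
    simp [Matrix.mulVec, dotProduct, Fin.sum_univ_two]
  rw [h]
  refine le_trans (PadicInt.nonarchimedean _ _) (max_le_max ?_ ?_) <;>
    · rw [norm_mul]
      exact le_trans (mul_le_of_le_one_left (norm_nonneg _) (PadicInt.norm_le_one _)) le_rfl

/-- if a subgroup Γ₀ of SL₂(ℤ_p) has open closure in SL₂(ℤ_p), then the
closure of the orbit Γ₀·u of any nonzero vector u ∈ ℤ_p² is open. SL₂(ℤ_p) carries the
topology induced from the matrix space. -/
theorem stmt15 (p : ℕ) [Fact p.Prime]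
    (Γ₀ : Subgroup (Matrix.SpecialLinearGroup (Fin 2) ℤ_[p])) :
    let _i : TopologicalSpace (Matrix.SpecialLinearGroup (Fin 2) ℤ_[p]) :=
      TopologicalSpace.induced
        (fun g => (g : Matrix (Fin 2) (Fin 2) ℤ_[p])) inferInstance
    IsOpen (closure (Γ₀ : Set (Matrix.SpecialLinearGroup (Fin 2) ℤ_[p]))) →
    ∀ u : Fin 2 → ℤ_[p], u ≠ 0 →
      IsOpen (closure {w : Fin 2 → ℤ_[p] | ∃ g ∈ Γ₀,
        w = (g : Matrix (Fin 2) (Fin 2) ℤ_[p]).mulVec u}) := by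
  intro _i hH u hu
  have hce : Continuous (fun g : Matrix.SpecialLinearGroup (Fin 2) ℤ_[p] =>
      (g : Matrix (Fin 2) (Fin 2) ℤ_[p])) := by
    show @Continuous _ _ (TopologicalSpace.induced
      (fun g : Matrix.SpecialLinearGroup (Fin 2) ℤ_[p] =>
        (g : Matrix (Fin 2) (Fin 2) ℤ_[p])) inferInstance) _ _
    exact continuous_induced_dom
  set O : Set (Fin 2 → ℤ_[p]) := {w : Fin 2 → ℤ_[p] | ∃ g ∈ Γ₀,
    w = (g : Matrix (Fin 2) (Fin 2) ℤ_[p]).mulVec u} with hO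
  -- closure of Γ₀ absorbs right multiplication by Γ₀
  have h1 : ∀ γ ∈ Γ₀, ∀ g ∈ closure (Γ₀ : Set (Matrix.SpecialLinearGroup (Fin 2) ℤ_[p])),
      g * γ ∈ closure (Γ₀ : Set (Matrix.SpecialLinearGroup (Fin 2) ℤ_[p])) := by
    intro γ hγ g hg
    have hf : Continuous (fun g : Matrix.SpecialLinearGroup (Fin 2) ℤ_[p] => g * γ) := by
      show @Continuous _ _ _i (TopologicalSpace.induced
        (fun g : Matrix.SpecialLinearGroup (Fin 2) ℤ_[p] =>
          (g : Matrix (Fin 2) (Fin 2) ℤ_[p])) inferInstance) _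
      apply continuous_induced_rng.mpr
      have heq : ((fun g : Matrix.SpecialLinearGroup (Fin 2) ℤ_[p] =>
            (g : Matrix (Fin 2) (Fin 2) ℤ_[p])) ∘
          (fun g : Matrix.SpecialLinearGroup (Fin 2) ℤ_[p] => g * γ)) =
          fun g : Matrix.SpecialLinearGroup (Fin 2) ℤ_[p] =>
            (g : Matrix (Fin 2) (Fin 2) ℤ_[p]) * (γ : Matrix (Fin 2) (Fin 2) ℤ_[p]) := by
        funext x; exact Matrix.SpecialLinearGroup.coe_mul x γ
      rw [heq]
      exact Continuous.matrix_mul hce continuous_const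
    have himg := image_closure_subset_closure_image
      (s := (Γ₀ : Set (Matrix.SpecialLinearGroup (Fin 2) ℤ_[p]))) hf
    have h2 : (fun g : Matrix.SpecialLinearGroup (Fin 2) ℤ_[p] => g * γ) ''
        (Γ₀ : Set (Matrix.SpecialLinearGroup (Fin 2) ℤ_[p]))
        ⊆ (Γ₀ : Set (Matrix.SpecialLinearGroup (Fin 2) ℤ_[p])) := by
      rintro _ ⟨x, hx, rfl⟩; exact mul_mem hx hγ
    exact closure_mono h2 (himg ⟨g, hg, rfl⟩)
  -- elements of closure Γ₀ send u into closure O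
  have h2 : ∀ g ∈ closure (Γ₀ : Set (Matrix.SpecialLinearGroup (Fin 2) ℤ_[p])),
      (g : Matrix (Fin 2) (Fin 2) ℤ_[p]).mulVec u ∈ closure O := by
    intro g hg
    have hφ : Continuous (fun g : Matrix.SpecialLinearGroup (Fin 2) ℤ_[p] =>
        (g : Matrix (Fin 2) (Fin 2) ℤ_[p]).mulVec u) :=
      Continuous.matrix_mulVec hce continuous_const
    have hstep := image_closure_subset_closure_image
      (s := (Γ₀ : Set (Matrix.SpecialLinearGroup (Fin 2) ℤ_[p]))) hφ ⟨g, hg, rfl⟩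
    refine closure_mono ?_ hstep
    rintro _ ⟨x, hx, rfl⟩; exact ⟨x, hx, rfl⟩
  -- elements of closure Γ₀ preserve closure O
  have h3 : ∀ g ∈ closure (Γ₀ : Set (Matrix.SpecialLinearGroup (Fin 2) ℤ_[p])),
      ∀ v ∈ closure O, (g : Matrix (Fin 2) (Fin 2) ℤ_[p]).mulVec v ∈ closure O := by
    intro g hg v hv
    have hψ : Continuous (fun v : Fin 2 → ℤ_[p] =>
        (g : Matrix (Fin 2) (Fin 2) ℤ_[p]).mulVec v) :=
      Continuous.matrix_mulVec continuous_const continuous_id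
    have hsub : (fun v : Fin 2 → ℤ_[p] =>
        (g : Matrix (Fin 2) (Fin 2) ℤ_[p]).mulVec v) '' O ⊆ closure O := by
      rintro _ ⟨x, ⟨γ, hγ, rfl⟩, rfl⟩
      have heq : (g : Matrix (Fin 2) (Fin 2) ℤ_[p]).mulVec
          ((γ : Matrix (Fin 2) (Fin 2) ℤ_[p]).mulVec u)
          = ((g * γ : Matrix.SpecialLinearGroup (Fin 2) ℤ_[p]) :
              Matrix (Fin 2) (Fin 2) ℤ_[p]).mulVec u := by
        rw [Matrix.mulVec_mulVec, ← Matrix.SpecialLinearGroup.coe_mul]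
      show (g : Matrix (Fin 2) (Fin 2) ℤ_[p]).mulVec
          ((γ : Matrix (Fin 2) (Fin 2) ℤ_[p]).mulVec u) ∈ closure O
      rw [heq]
      exact h2 _ (h1 γ hγ g hg)
    have hstep := image_closure_subset_closure_image (s := O) hψ ⟨v, hv, rfl⟩
    exact closure_minimal hsub isClosed_closure hstep
  -- extract a small entrywise ball inside closure Γ₀
  obtain ⟨U, hU, hpre⟩ := isOpen_induced_iff.mp hH
  have h1U : (1 : Matrix (Fin 2) (Fin 2) ℤ_[p]) ∈ U := by
    have : (1 : Matrix.SpecialLinearGroup (Fin 2) ℤ_[p]) ∈ closure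
        (Γ₀ : Set (Matrix.SpecialLinearGroup (Fin 2) ℤ_[p])) :=
      subset_closure (Subgroup.one_mem Γ₀)
    rw [← hpre] at this
    simpa using this
  have hU2 : @IsOpen (Fin 2 → Fin 2 → ℤ_[p]) _ U := hU
  set m1 : Fin 2 → Fin 2 → ℤ_[p] := ((1 : Matrix (Fin 2) (Fin 2) ℤ_[p]) : Fin 2 → Fin 2 → ℤ_[p])
    with hm1
  obtain ⟨ε, hε, hball⟩ := Metric.isOpen_iff.mp hU2 m1 h1U
  have hp1 : (1:ℝ) < p := by exact_mod_cast (Fact.out : p.Prime).one_lt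
  obtain ⟨k, hk⟩ := exists_pow_lt_of_lt_one hε (by
    exact inv_lt_one_of_one_lt₀ hp1 : (p:ℝ)⁻¹ < 1)
  set n : ℕ := k + 1 with hn
  have hn1 : 1 ≤ n := Nat.le_add_left 1 k
  have hnε : (p:ℝ)^(-(n:ℤ)) < ε := by
    have h0 : (p:ℝ)^(-(n:ℤ)) = ((p:ℝ)⁻¹)^n := by
      rw [_root_.zpow_neg, inv_pow, zpow_natCast]
    rw [h0]
    calc ((p:ℝ)⁻¹)^n ≤ ((p:ℝ)⁻¹)^k := by
          apply pow_le_pow_of_le_one (by positivity) (by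
            rw [inv_le_one_iff₀]; right; linarith) (by omega)
      _ < ε := hk
  have hball2 : ∀ g : Matrix.SpecialLinearGroup (Fin 2) ℤ_[p],
      (∀ i j, ‖(g : Matrix (Fin 2) (Fin 2) ℤ_[p]) i j
          - (1 : Matrix (Fin 2) (Fin 2) ℤ_[p]) i j‖ ≤ (p:ℝ)^(-(n:ℤ))) →
      g ∈ closure (Γ₀ : Set (Matrix.SpecialLinearGroup (Fin 2) ℤ_[p])) := by
    intro g hg
    rw [← hpre]
    show (g : Matrix (Fin 2) (Fin 2) ℤ_[p]) ∈ U
    apply hball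
    refine Metric.mem_ball.mpr ((dist_pi_lt_iff hε).mpr ?_)
    intro i
    rw [dist_pi_lt_iff hε]
    intro j
    rw [dist_eq_norm]
    exact lt_of_le_of_lt (hg i j) hnε
  -- norms are bounded below on the orbit closure
  set r : ℝ := max ‖u 0‖ ‖u 1‖ with hr
  have hrpos : 0 < r := by
    rcases lt_or_ge 0 r with h|h
    · exact h
    · exfalso
      apply hu
      have h0 : ‖u 0‖ ≤ 0 := le_trans (le_max_left _ _) h
      have h1 : ‖u 1‖ ≤ 0 := le_trans (le_max_right _ _) h
      funext i
      fin_cases i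
      · simpa using norm_le_zero_iff.mp h0
      · simpa using norm_le_zero_iff.mp h1
  have hlow : closure O ⊆ {v : Fin 2 → ℤ_[p] | r ≤ max ‖v 0‖ ‖v 1‖} := by
    apply closure_minimal
    · rintro x ⟨γ, hγ, rfl⟩
      have hinv : ((γ⁻¹ : Matrix.SpecialLinearGroup (Fin 2) ℤ_[p]) :
          Matrix (Fin 2) (Fin 2) ℤ_[p]).mulVec
          ((γ : Matrix (Fin 2) (Fin 2) ℤ_[p]).mulVec u) = u := by
        rw [Matrix.mulVec_mulVec, ← Matrix.SpecialLinearGroup.coe_mul, inv_mul_cancel,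
          Matrix.SpecialLinearGroup.coe_one, Matrix.one_mulVec]
      have hb : ∀ i : Fin 2, ‖u i‖ ≤ max ‖((γ : Matrix (Fin 2) (Fin 2) ℤ_[p]).mulVec u) 0‖
          ‖((γ : Matrix (Fin 2) (Fin 2) ℤ_[p]).mulVec u) 1‖ := by
        intro i
        conv_lhs => rw [← hinv]
        exact mulVec_norm_le _ _ i
      exact max_le (hb 0) (hb 1)
    · have hcont : Continuous (fun v : Fin 2 → ℤ_[p] => max ‖v 0‖ ‖v 1‖) :=
        ((continuous_apply (0 : Fin 2)).norm).max ((continuous_apply (1 : Fin 2)).norm)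
      exact isClosed_le continuous_const hcont
  -- main openness argument
  rw [Metric.isOpen_iff]
  intro w hw
  have hwmax : 0 < max ‖w 0‖ ‖w 1‖ := lt_of_lt_of_le hrpos (hlow hw)
  have hpZ : ((p:ℤ_[p])^n) ≠ 0 := by
    apply pow_ne_zero
    intro h0
    have := PadicInt.norm_p (p := p)
    rw [h0, norm_zero] at this
    have : (0:ℝ) < (p:ℝ)⁻¹ := by positivity
    linarith [this]
  rcases le_total ‖w 1‖ ‖w 0‖ with hcase | hcase
  · -- first coordinate dominates
    have hw0 : 0 < ‖w 0‖ := by rwa [max_eq_left hcase] at hwmax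
    have ha : w 0 ≠ 0 := by rwa [norm_pos_iff] at hw0
    obtain ⟨b, hb⟩ : w 0 ∣ w 1 := dvd_of_norm_le ha hcase
    refine ⟨(p:ℝ)^(-(n:ℤ)) * ‖w 0‖, by positivity, ?_⟩
    intro v hv
    rw [Metric.mem_ball, dist_pi_lt_iff (by positivity)] at hv
    have hnpn : ‖(p:ℤ_[p])^n * w 0‖ = (p:ℝ)^(-(n:ℤ)) * ‖w 0‖ := by
      rw [norm_mul, PadicInt.norm_p_pow]
    have hdvd : ∀ i, (p:ℤ_[p])^n * w 0 ∣ (v i - w i) := by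
      intro i
      apply dvd_of_norm_le (mul_ne_zero hpZ ha)
      rw [hnpn]
      have := hv i
      rw [dist_eq_norm] at this
      exact this.le
    obtain ⟨c₀, hc₀⟩ := hdvd 0
    obtain ⟨c₁, hc₁⟩ := hdvd 1
    obtain ⟨g, hgnorm, hgmul⟩ := build1 hn1 (w 0) b c₀ c₁
    have hgw : (g : Matrix (Fin 2) (Fin 2) ℤ_[p]).mulVec w = v := by
      have hw2 : w = ![w 0, w 0 * b] := by
        funext i; fin_cases i <;> simp [hb]
      rw [hw2, hgmul]
      funext i; fin_cases i
      · show w 0 + (p:ℤ_[p])^n * w 0 * c₀ = v 0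
        have : v 0 - w 0 = (p:ℤ_[p])^n * w 0 * c₀ := hc₀
        linear_combination -this
      · show w 0 * b + (p:ℤ_[p])^n * w 0 * c₁ = v 1
        have : v 1 - w 1 = (p:ℤ_[p])^n * w 0 * c₁ := hc₁
        linear_combination -this - hb
    have hgin := hball2 g hgnorm
    have := h3 g hgin w hw
    rwa [hgw] at this
  · -- second coordinate dominates
    have hw1 : 0 < ‖w 1‖ := by rwa [max_eq_right hcase] at hwmax
    have ha : w 1 ≠ 0 := by rwa [norm_pos_iff] at hw1
    obtain ⟨b, hb⟩ : w 1 ∣ w 0 := dvd_of_norm_le ha hcase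
    refine ⟨(p:ℝ)^(-(n:ℤ)) * ‖w 1‖, by positivity, ?_⟩
    intro v hv
    rw [Metric.mem_ball, dist_pi_lt_iff (by positivity)] at hv
    have hnpn : ‖(p:ℤ_[p])^n * w 1‖ = (p:ℝ)^(-(n:ℤ)) * ‖w 1‖ := by
      rw [norm_mul, PadicInt.norm_p_pow]
    have hdvd : ∀ i, (p:ℤ_[p])^n * w 1 ∣ (v i - w i) := by
      intro i
      apply dvd_of_norm_le (mul_ne_zero hpZ ha)
      rw [hnpn]
      have := hv i
      rw [dist_eq_norm] at this
      exact this.le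
    obtain ⟨c₀, hc₀⟩ := hdvd 0
    obtain ⟨c₁, hc₁⟩ := hdvd 1
    obtain ⟨g, hgnorm, hgmul⟩ := build2 hn1 (w 1) b c₀ c₁
    have hgw : (g : Matrix (Fin 2) (Fin 2) ℤ_[p]).mulVec w = v := by
      have hw2 : w = ![w 1 * b, w 1] := by
        funext i; fin_cases i <;> simp [hb]
      rw [hw2, hgmul]
      funext i; fin_cases i
      · show w 1 * b + (p:ℤ_[p])^n * w 1 * c₀ = v 0
        have : v 0 - w 0 = (p:ℤ_[p])^n * w 1 * c₀ := hc₀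
        linear_combination -this - hb
      · show w 1 + (p:ℤ_[p])^n * w 1 * c₁ = v 1
        have : v 1 - w 1 = (p:ℤ_[p])^n * w 1 * c₁ := hc₁
        linear_combination -this
    have hgin := hball2 g hgnorm
    have := h3 g hgin w hw
    rwa [hgw] at this
end

section
/- Let S be the Markov surface x² + y² + z² + xyz = Ax + By + Cz + D over a p-adic local field K with A, B, C, D ∈ o_K, and let Γ be the group generated by the three Vieta involutions. A point (x,y,z) ∈ S(K) has bounded Γ-orbit if and only if (x,y,z) ∈ S(o_K). Consequently, S(o_K) is the unique maximal compact Γ-invariant subset of S(K). -/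
open IsUltrametricDist

namespace Stmt18Aux

variable {K : Type*} [NormedField K] [IsUltrametricDist K]

lemma dom_add {a b : K} (h : ‖a‖ < ‖b‖) : ‖a + b‖ = ‖b‖ := by
  rw [norm_add_eq_max_of_norm_ne_norm h.ne, max_eq_right h.le]

lemma dom_key {x c y z : K} (hc : ‖c‖ ≤ 1) (h : max ‖x‖ 1 < ‖y‖ * ‖z‖) :
    ‖-x + c - y * z‖ = ‖y‖ * ‖z‖ := by
  have e : -x + c - y * z = (-x + c) + -(y * z) := by ring
  have h1 : ‖-x + c‖ ≤ max ‖x‖ 1 :=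
    (norm_add_le_max _ _).trans (max_le_max (norm_neg x).le hc)
  have h2 : ‖-x + c‖ < ‖-(y * z)‖ := by
    rw [norm_neg, norm_mul]; exact lt_of_le_of_lt h1 h
  rw [e, dom_add h2, norm_neg, norm_mul]

lemma int_bound {x c y z : K} (hx : ‖x‖ ≤ 1) (hc : ‖c‖ ≤ 1) (hy : ‖y‖ ≤ 1)
    (hz : ‖z‖ ≤ 1) : ‖-x + c - y * z‖ ≤ 1 := by
  have e : -x + c - y * z = (-x + c) + -(y * z) := by ring
  rw [e]
  refine (norm_add_le_max _ _).trans (max_le ((norm_add_le_max _ _).trans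
    (max_le (by rwa [norm_neg]) hc)) ?_)
  rw [norm_neg, norm_mul]
  nlinarith [norm_nonneg y, norm_nonneg z]

def mS1 (A : K) (v : K × K × K) : K × K × K := (-v.1 + A - v.2.1 * v.2.2, v.2.1, v.2.2)
def mS2 (B : K) (v : K × K × K) : K × K × K := (v.1, -v.2.1 + B - v.2.2 * v.1, v.2.2)
def mS3 (C : K) (v : K × K × K) : K × K × K := (v.1, v.2.1, -v.2.2 + C - v.1 * v.2.1)

def mStep (A B C : K) (u v : K × K × K) : Prop := v = mS1 A u ∨ v = mS2 B u ∨ v = mS3 C u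

def mOrb (A B C : K) (u : K × K × K) : Set (K × K × K) :=
  {v | Relation.ReflTransGen (mStep A B C) u v}

def mTau (v : K × K × K) : K × K × K := (v.2.1, v.2.2, v.1)

lemma norm_mTau (v : K × K × K) : ‖mTau v‖ = ‖v‖ := by
  show max ‖v.2.1‖ (max ‖v.2.2‖ ‖v.1‖) = max ‖v.1‖ (max ‖v.2.1‖ ‖v.2.2‖)
  rw [max_comm ‖v.2.2‖ ‖v.1‖, max_left_comm]

lemma step_mTau {A B C : K} {u v : K × K × K} (h : mStep A B C u v) :
    mStep B C A (mTau u) (mTau v) := by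
  rcases h with h | h | h <;> subst h
  · exact Or.inr (Or.inr rfl)
  · exact Or.inl rfl
  · exact Or.inr (Or.inl rfl)

lemma orb_mTau {A B C : K} {u w : K × K × K} (h : w ∈ mOrb A B C u) :
    mTau w ∈ mOrb B C A (mTau u) :=
  Relation.ReflTransGen.lift mTau (fun _ _ => step_mTau) _ _ h

lemma grow (A B C : K) (hA : ‖A‖ ≤ 1) (hC : ‖C‖ ≤ 1) (v : K × K × K)
    (hy : 1 < ‖v.2.1‖)
    (hd : max ‖v.2.2‖ 1 < ‖v.1‖ ∨ max ‖v.1‖ 1 < ‖v.2.2‖) (n : ℕ) :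
    ∃ w ∈ mOrb A B C v, ‖w.2.1‖ = ‖v.2.1‖ ∧
      (max ‖w.2.2‖ 1 < ‖w.1‖ ∨ max ‖w.1‖ 1 < ‖w.2.2‖) ∧
      max ‖v.1‖ ‖v.2.2‖ * ‖v.2.1‖ ^ n ≤ max ‖w.1‖ ‖w.2.2‖ := by
  induction n with
  | zero => exact ⟨v, Relation.ReflTransGen.refl, rfl, hd, by simp⟩
  | succ n ih =>
    obtain ⟨w, hw, hwy, hwd, hwb⟩ := ih
    have hb1 : (1 : ℝ) < ‖w.2.1‖ := hwy ▸ hy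
    have hb0 : (0 : ℝ) < ‖w.2.1‖ := lt_trans one_pos hb1
    rcases hwd with hcase | hcase
    · -- x dominant, apply mS3
      have hx1 : (1 : ℝ) < ‖w.1‖ := lt_of_le_of_lt (le_max_right _ _) hcase
      have hkey : ‖(mS3 C w).2.2‖ = ‖w.1‖ * ‖w.2.1‖ := by
        show ‖-w.2.2 + C - w.1 * w.2.1‖ = ‖w.1‖ * ‖w.2.1‖
        exact dom_key hC (lt_of_lt_of_le hcase (by nlinarith))
      have hwM : max ‖w.1‖ ‖w.2.2‖ = ‖w.1‖ :=
        max_eq_left (le_of_lt (lt_of_le_of_lt (le_max_left _ 1) hcase))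
      have hnewM : max ‖(mS3 C w).1‖ ‖(mS3 C w).2.2‖ = ‖w.1‖ * ‖w.2.1‖ := by
        rw [hkey, show (mS3 C w).1 = w.1 from rfl]
        exact max_eq_right (by nlinarith)
      refine ⟨mS3 C w, Relation.ReflTransGen.tail hw (Or.inr (Or.inr rfl)), hwy ▸ rfl, ?_, ?_⟩
      · right
        rw [hkey, show (mS3 C w).1 = w.1 from rfl]
        exact max_lt (by nlinarith) (by nlinarith)
      · rw [hnewM]
        calc max ‖v.1‖ ‖v.2.2‖ * ‖v.2.1‖ ^ (n + 1)
            = max ‖v.1‖ ‖v.2.2‖ * ‖v.2.1‖ ^ n * ‖v.2.1‖ := by ring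
          _ ≤ ‖w.1‖ * ‖v.2.1‖ := by
              have := hwM ▸ hwb
              exact mul_le_mul_of_nonneg_right this (by positivity)
          _ = ‖w.1‖ * ‖w.2.1‖ := by rw [hwy]
    · -- z dominant, apply mS1
      have hz1 : (1 : ℝ) < ‖w.2.2‖ := lt_of_le_of_lt (le_max_right _ _) hcase
      have hkey : ‖(mS1 A w).1‖ = ‖w.2.1‖ * ‖w.2.2‖ := by
        show ‖-w.1 + A - w.2.1 * w.2.2‖ = ‖w.2.1‖ * ‖w.2.2‖
        exact dom_key hA (lt_of_lt_of_le hcase (by nlinarith))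
      have hwM : max ‖w.1‖ ‖w.2.2‖ = ‖w.2.2‖ :=
        max_eq_right (le_of_lt (lt_of_le_of_lt (le_max_left _ 1) hcase))
      have hnewM : max ‖(mS1 A w).1‖ ‖(mS1 A w).2.2‖ = ‖w.2.1‖ * ‖w.2.2‖ := by
        rw [hkey, show (mS1 A w).2.2 = w.2.2 from rfl]
        exact max_eq_left (by nlinarith)
      refine ⟨mS1 A w, Relation.ReflTransGen.tail hw (Or.inl rfl), hwy ▸ rfl, ?_, ?_⟩
      · left
        rw [hkey, show (mS1 A w).2.2 = w.2.2 from rfl]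
        exact max_lt (by nlinarith) (by nlinarith)
      · rw [hnewM]
        calc max ‖v.1‖ ‖v.2.2‖ * ‖v.2.1‖ ^ (n + 1)
            = max ‖v.1‖ ‖v.2.2‖ * ‖v.2.1‖ ^ n * ‖v.2.1‖ := by ring
          _ ≤ ‖w.2.2‖ * ‖v.2.1‖ := by
              have := hwM ▸ hwb
              exact mul_le_mul_of_nonneg_right this (by positivity)
          _ = ‖w.2.1‖ * ‖w.2.2‖ := by rw [hwy]; ring

lemma grow_unb (A B C : K) (hA : ‖A‖ ≤ 1) (hC : ‖C‖ ≤ 1) (v : K × K × K)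
    (hy : 1 < ‖v.2.1‖)
    (hd : max ‖v.2.2‖ 1 < ‖v.1‖ ∨ max ‖v.1‖ 1 < ‖v.2.2‖) (r : ℝ) :
    ∃ w ∈ mOrb A B C v, r < ‖w‖ := by
  obtain ⟨n, hn⟩ := pow_unbounded_of_one_lt r hy
  obtain ⟨w, hw, -, -, hwb⟩ := grow A B C hA hC v hy hd n
  have hM1 : (1 : ℝ) ≤ max ‖v.1‖ ‖v.2.2‖ := by
    rcases hd with h | h
    · exact ((le_max_right ‖v.2.2‖ 1).trans h.le).trans (le_max_left _ _)
    · exact ((le_max_right ‖v.1‖ 1).trans h.le).trans (le_max_right _ _)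
  refine ⟨w, hw, ?_⟩
  calc r < ‖v.2.1‖ ^ n := hn
    _ ≤ max ‖v.1‖ ‖v.2.2‖ * ‖v.2.1‖ ^ n := le_mul_of_one_le_left (by positivity) hM1
    _ ≤ max ‖w.1‖ ‖w.2.2‖ := hwb
    _ ≤ ‖w‖ := max_le (norm_fst_le w) ((norm_snd_le w.2).trans (norm_snd_le w))

lemma norm_add_lt {a b : K} {t : ℝ} (ha : ‖a‖ < t) (hb : ‖b‖ < t) : ‖a + b‖ < t :=
  (norm_add_le_max a b).trans_lt (max_lt ha hb)

lemma norm_sub_lt {a b : K} {t : ℝ} (ha : ‖a‖ < t) (hb : ‖b‖ < t) : ‖a - b‖ < t := by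
  rw [sub_eq_add_neg]
  exact norm_add_lt ha (by rwa [norm_neg])

set_option maxHeartbeats 1600000 in
lemma core (A B C D : K) (hA : ‖A‖ ≤ 1) (hB : ‖B‖ ≤ 1) (hC : ‖C‖ ≤ 1) (hD : ‖D‖ ≤ 1)
    (v : K × K × K)
    (hv : v.1 ^ 2 + v.2.1 ^ 2 + v.2.2 ^ 2 + v.1 * v.2.1 * v.2.2
        = A * v.1 + B * v.2.1 + C * v.2.2 + D)
    (hxz : ‖v.1‖ ≤ ‖v.2.2‖) (hyz : ‖v.2.1‖ ≤ ‖v.2.2‖) (hz : 1 < ‖v.2.2‖) (r : ℝ) :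
    ∃ w ∈ mOrb A B C v, r < ‖w‖ := by
  obtain ⟨x, y, z⟩ := v
  simp only at hv hxz hyz hz
  rcases eq_or_lt_of_le hyz with hb | hb
  · -- ‖y‖ = ‖z‖ : one move s₁, then grow
    have hk : ‖(mS1 A (x, y, z)).1‖ = ‖y‖ * ‖z‖ := by
      show ‖-x + A - y * z‖ = ‖y‖ * ‖z‖
      exact dom_key hA (max_lt (by nlinarith) (by nlinarith))
    have hy1 : 1 < ‖(mS1 A (x, y, z)).2.1‖ := by show 1 < ‖y‖; rw [hb]; exact hz
    have hd : max ‖(mS1 A (x, y, z)).2.2‖ 1 < ‖(mS1 A (x, y, z)).1‖ ∨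
        max ‖(mS1 A (x, y, z)).1‖ 1 < ‖(mS1 A (x, y, z)).2.2‖ := by
      left
      rw [hk, show (mS1 A ((x, y, z) : K × K × K)).2.2 = z from rfl]
      exact max_lt (by nlinarith) (by nlinarith)
    obtain ⟨w, hw, hr⟩ := grow_unb A B C hA hC _ hy1 hd r
    exact ⟨w, Relation.ReflTransGen.head (Or.inl rfl) hw, hr⟩
  · rcases eq_or_lt_of_le hxz with ha | ha
    · -- ‖x‖ = ‖z‖ : two moves s₂ then s₁, then grow
      have hk1 : ‖(mS2 B (x, y, z)).2.1‖ = ‖z‖ * ‖x‖ := by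
        show ‖-y + B - z * x‖ = ‖z‖ * ‖x‖
        exact dom_key hB (max_lt (by nlinarith) (by nlinarith))
      set w₁ := mS2 B (x, y, z) with hw₁def
      have hw₁1 : w₁.1 = x := rfl
      have hw₁3 : w₁.2.2 = z := rfl
      have hk2 : ‖(mS1 A w₁).1‖ = ‖w₁.2.1‖ * ‖z‖ := by
        show ‖-w₁.1 + A - w₁.2.1 * w₁.2.2‖ = ‖w₁.2.1‖ * ‖w₁.2.2‖
        refine dom_key hA ?_
        rw [hw₁1, hw₁3, hk1, ← ha]
        exact max_lt (by nlinarith) (by nlinarith)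
      have hy1 : 1 < ‖(mS1 A w₁).2.1‖ := by
        show 1 < ‖w₁.2.1‖
        rw [hk1, ← ha]; nlinarith
      have hd : max ‖(mS1 A w₁).2.2‖ 1 < ‖(mS1 A w₁).1‖ ∨
          max ‖(mS1 A w₁).1‖ 1 < ‖(mS1 A w₁).2.2‖ := by
        left
        rw [hk2, hk1, ← ha, show (mS1 A w₁).2.2 = w₁.2.2 from rfl, hw₁3]
        exact max_lt (by nlinarith) (by nlinarith)
      obtain ⟨w, hw, hr⟩ := grow_unb A B C hA hC _ hy1 hd r
      exact ⟨w, Relation.ReflTransGen.head (Or.inr (Or.inl rfl))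
        (Relation.ReflTransGen.head (Or.inl rfl) hw), hr⟩
    · -- ‖x‖ < ‖z‖ and ‖y‖ < ‖z‖ : use the surface equation
      have hab : ‖x‖ * ‖y‖ = ‖z‖ := by
        rcases lt_trichotomy (‖x‖ * ‖y‖) ‖z‖ with hlt | heq | hgt
        · exfalso
          have h1 : z ^ 2 = A * x + B * y + C * z + D - x ^ 2 - y ^ 2 - x * y * z := by
            linear_combination hv
          have hx0 : (0 : ℝ) ≤ ‖x‖ := norm_nonneg x
          have hy0 : (0 : ℝ) ≤ ‖y‖ := norm_nonneg y
          have hA0 : (0 : ℝ) ≤ ‖A‖ := norm_nonneg A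
          have hB0 : (0 : ℝ) ≤ ‖B‖ := norm_nonneg B
          have hC0 : (0 : ℝ) ≤ ‖C‖ := norm_nonneg C
          have hbig : ‖A * x + B * y + C * z + D - x ^ 2 - y ^ 2 - x * y * z‖ < ‖z‖ ^ 2 := by
            refine norm_sub_lt (norm_sub_lt (norm_sub_lt (norm_add_lt (norm_add_lt
              (norm_add_lt ?_ ?_) ?_) ?_) ?_) ?_) ?_
            · rw [norm_mul]; nlinarith
            · rw [norm_mul]; nlinarith
            · rw [norm_mul]; nlinarith
            · nlinarith
            · rw [norm_pow]; nlinarith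
            · rw [norm_pow]; nlinarith
            · rw [norm_mul, norm_mul]; nlinarith
          rw [← h1, norm_pow] at hbig
          exact lt_irrefl _ hbig
        · exact heq
        · exfalso
          have h2 : x * y * z = A * x + B * y + C * z + D - x ^ 2 - y ^ 2 - z ^ 2 := by
            linear_combination hv
          have hx0 : (0 : ℝ) ≤ ‖x‖ := norm_nonneg x
          have hy0 : (0 : ℝ) ≤ ‖y‖ := norm_nonneg y
          have hA0 : (0 : ℝ) ≤ ‖A‖ := norm_nonneg A
          have hB0 : (0 : ℝ) ≤ ‖B‖ := norm_nonneg B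
          have hC0 : (0 : ℝ) ≤ ‖C‖ := norm_nonneg C
          have hzpos : (0 : ℝ) < ‖z‖ := by linarith
          have hxpos : (0 : ℝ) < ‖x‖ := by
            rcases hx0.lt_or_eq with h | h
            · exact h
            · rw [← h, zero_mul] at hgt; linarith
          have hypos : (0 : ℝ) < ‖y‖ := by
            rcases hy0.lt_or_eq with h | h
            · exact h
            · rw [← h, mul_zero] at hgt; linarith
          have hx1 : (1 : ℝ) < ‖x‖ := by
            have h1 : ‖y‖ * 1 < ‖y‖ * ‖x‖ := by rw [mul_one, mul_comm]; linarith
            exact lt_of_mul_lt_mul_left h1 hy0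
          have hy1 : (1 : ℝ) < ‖y‖ := by
            have h1 : ‖x‖ * 1 < ‖x‖ * ‖y‖ := by rw [mul_one]; linarith
            exact lt_of_mul_lt_mul_left h1 hx0
          have hab1 : (1 : ℝ) < ‖x‖ * ‖y‖ := by linarith
          have hzabc : ‖z‖ < ‖x‖ * ‖y‖ * ‖z‖ := by
            have h1 := mul_lt_mul_of_pos_right hab1 hzpos
            rw [one_mul] at h1; exact h1
          have key : ∀ t : ℝ, t ≤ ‖z‖ → t < ‖x‖ * ‖y‖ * ‖z‖ := fun t ht => by linarith
          have hxbc : ‖x‖ < ‖y‖ * ‖z‖ := by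
            have h1 := mul_lt_mul_of_pos_right hy1 hzpos
            rw [one_mul] at h1; linarith
          have hyac : ‖y‖ < ‖x‖ * ‖z‖ := by
            have h1 := mul_lt_mul_of_pos_right hx1 hzpos
            rw [one_mul] at h1; linarith
          have hbig : ‖A * x + B * y + C * z + D - x ^ 2 - y ^ 2 - z ^ 2‖
              < ‖x‖ * ‖y‖ * ‖z‖ := by
            refine norm_sub_lt (norm_sub_lt (norm_sub_lt (norm_add_lt (norm_add_lt
              (norm_add_lt ?_ ?_) ?_) ?_) ?_) ?_) ?_
            · rw [norm_mul]; exact key _ (by nlinarith)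
            · rw [norm_mul]; exact key _ (by nlinarith)
            · rw [norm_mul]; exact key _ (by nlinarith)
            · exact key _ (by linarith)
            · rw [norm_pow]; nlinarith [mul_lt_mul_of_pos_left hxbc hxpos]
            · rw [norm_pow]; nlinarith [mul_lt_mul_of_pos_left hyac hypos]
            · rw [norm_pow]; nlinarith [mul_lt_mul_of_pos_right hgt hzpos]
          rw [← h2, norm_mul, norm_mul] at hbig
          exact lt_irrefl _ hbig
      have hy1 : 1 < ‖y‖ := by
        have hx0 : (0 : ℝ) ≤ ‖x‖ := norm_nonneg x
        nlinarith
      have hd : max ‖((x, y, z) : K × K × K).2.2‖ 1 < ‖((x, y, z) : K × K × K).1‖ ∨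
          max ‖((x, y, z) : K × K × K).1‖ 1 < ‖((x, y, z) : K × K × K).2.2‖ := by
        right
        exact max_lt ha hz
      exact grow_unb A B C hA hC (x, y, z) hy1 hd r

lemma main_z (A B C D : K) (hA : ‖A‖ ≤ 1) (hB : ‖B‖ ≤ 1) (hC : ‖C‖ ≤ 1) (hD : ‖D‖ ≤ 1)
    (v : K × K × K)
    (hv : v.1 ^ 2 + v.2.1 ^ 2 + v.2.2 ^ 2 + v.1 * v.2.1 * v.2.2
        = A * v.1 + B * v.2.1 + C * v.2.2 + D)
    (hxz : ‖v.1‖ ≤ ‖v.2.2‖) (hyz : ‖v.2.1‖ ≤ ‖v.2.2‖) (hz : 1 < ‖v.2.2‖) (r : ℝ) :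
    ∃ w ∈ mOrb A B C v, r < ‖w‖ :=
  core A B C D hA hB hC hD v hv hxz hyz hz r

lemma main_y (A B C D : K) (hA : ‖A‖ ≤ 1) (hB : ‖B‖ ≤ 1) (hC : ‖C‖ ≤ 1) (hD : ‖D‖ ≤ 1)
    (v : K × K × K)
    (hv : v.1 ^ 2 + v.2.1 ^ 2 + v.2.2 ^ 2 + v.1 * v.2.1 * v.2.2
        = A * v.1 + B * v.2.1 + C * v.2.2 + D)
    (hxy : ‖v.1‖ ≤ ‖v.2.1‖) (hzy : ‖v.2.2‖ ≤ ‖v.2.1‖) (hy : 1 < ‖v.2.1‖) (r : ℝ) :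
    ∃ w ∈ mOrb A B C v, r < ‖w‖ := by
  set u : K × K × K := (v.2.2, v.1, v.2.1) with hu
  have hueq : u.1 ^ 2 + u.2.1 ^ 2 + u.2.2 ^ 2 + u.1 * u.2.1 * u.2.2
      = C * u.1 + A * u.2.1 + B * u.2.2 + D := by
    show v.2.2 ^ 2 + v.1 ^ 2 + v.2.1 ^ 2 + v.2.2 * v.1 * v.2.1
      = C * v.2.2 + A * v.1 + B * v.2.1 + D
    linear_combination hv
  obtain ⟨w, hw, hr⟩ := core C A B D hC hA hB hD u hueq hzy hxy hy r
  have h1 : mTau w ∈ mOrb A B C (mTau u) := orb_mTau hw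
  have h2 : mTau u = v := rfl
  rw [h2] at h1
  exact ⟨mTau w, h1, by rw [norm_mTau]; exact hr⟩

lemma main_x (A B C D : K) (hA : ‖A‖ ≤ 1) (hB : ‖B‖ ≤ 1) (hC : ‖C‖ ≤ 1) (hD : ‖D‖ ≤ 1)
    (v : K × K × K)
    (hv : v.1 ^ 2 + v.2.1 ^ 2 + v.2.2 ^ 2 + v.1 * v.2.1 * v.2.2
        = A * v.1 + B * v.2.1 + C * v.2.2 + D)
    (hyx : ‖v.2.1‖ ≤ ‖v.1‖) (hzx : ‖v.2.2‖ ≤ ‖v.1‖) (hx : 1 < ‖v.1‖) (r : ℝ) :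
    ∃ w ∈ mOrb A B C v, r < ‖w‖ := by
  set u : K × K × K := (v.2.1, v.2.2, v.1) with hu
  have hueq : u.1 ^ 2 + u.2.1 ^ 2 + u.2.2 ^ 2 + u.1 * u.2.1 * u.2.2
      = B * u.1 + C * u.2.1 + A * u.2.2 + D := by
    show v.2.1 ^ 2 + v.2.2 ^ 2 + v.1 ^ 2 + v.2.1 * v.2.2 * v.1
      = B * v.2.1 + C * v.2.2 + A * v.1 + D
    linear_combination hv
  obtain ⟨w, hw, hr⟩ := core B C A D hB hC hA hD u hueq hyx hzx hx r
  have h1 : mTau w ∈ mOrb C A B (mTau u) := orb_mTau hw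
  have h2 : mTau (mTau w) ∈ mOrb A B C (mTau (mTau u)) := orb_mTau h1
  have h3 : mTau (mTau u) = v := rfl
  rw [h3] at h2
  exact ⟨mTau (mTau w), h2, by rw [norm_mTau, norm_mTau]; exact hr⟩

lemma main (A B C D : K) (hA : ‖A‖ ≤ 1) (hB : ‖B‖ ≤ 1) (hC : ‖C‖ ≤ 1) (hD : ‖D‖ ≤ 1)
    (v : K × K × K)
    (hv : v.1 ^ 2 + v.2.1 ^ 2 + v.2.2 ^ 2 + v.1 * v.2.1 * v.2.2
        = A * v.1 + B * v.2.1 + C * v.2.2 + D)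
    (hbig : 1 < ‖v.1‖ ∨ 1 < ‖v.2.1‖ ∨ 1 < ‖v.2.2‖) (r : ℝ) :
    ∃ w ∈ mOrb A B C v, r < ‖w‖ := by
  rcases le_total ‖v.1‖ ‖v.2.2‖ with h1 | h1
  · rcases le_total ‖v.2.1‖ ‖v.2.2‖ with h2 | h2
    · exact main_z A B C D hA hB hC hD v hv h1 h2
        (by rcases hbig with h | h | h <;> linarith) r
    · exact main_y A B C D hA hB hC hD v hv (h1.trans h2) h2
        (by rcases hbig with h | h | h <;> linarith) r
  · rcases le_total ‖v.2.1‖ ‖v.2.2‖ with h2 | h2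
    · exact main_x A B C D hA hB hC hD v hv (h2.trans h1) h1
        (by rcases hbig with h | h | h <;> linarith) r
    · rcases le_total ‖v.1‖ ‖v.2.1‖ with h3 | h3
      · exact main_y A B C D hA hB hC hD v hv h3 h2
          (by rcases hbig with h | h | h <;> linarith) r
      · exact main_x A B C D hA hB hC hD v hv h3 h1
          (by rcases hbig with h | h | h <;> linarith) r

end Stmt18Aux


/-- on the Markov surface S : x²+y²+z²+xyz = Ax+By+Cz+D over a p-adic local
field K with A,B,C,D integral, a point of S(K) has bounded orbit under the group Γ
generated by the three Vieta involutions iff it lies in S(o_K); consequently S(o_K) is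
the unique maximal compact Γ-invariant subset of S(K). -/
theorem stmt18 (p : ℕ) [Fact p.Prime]
    {K : Type*} [NormedField K] [CompleteSpace K] [IsUltrametricDist K] [ProperSpace K]
    [Algebra ℚ_[p] K] [FiniteDimensional ℚ_[p] K]
    (hKnorm : ∀ x : ℚ_[p], ‖algebraMap ℚ_[p] K x‖ = ‖x‖)
    (A B C D : K) (hA : ‖A‖ ≤ 1) (hB : ‖B‖ ≤ 1) (hC : ‖C‖ ≤ 1) (hD : ‖D‖ ≤ 1) :
    let S : Set (K × K × K) := {v | v.1 ^ 2 + v.2.1 ^ 2 + v.2.2 ^ 2 + v.1 * v.2.1 * v.2.2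
        = A * v.1 + B * v.2.1 + C * v.2.2 + D}
    let s₁ : K × K × K → K × K × K := fun v => (-v.1 + A - v.2.1 * v.2.2, v.2.1, v.2.2)
    let s₂ : K × K × K → K × K × K := fun v => (v.1, -v.2.1 + B - v.2.2 * v.1, v.2.2)
    let s₃ : K × K × K → K × K × K := fun v => (v.1, v.2.1, -v.2.2 + C - v.1 * v.2.1)
    let step : K × K × K → K × K × K → Prop := fun u v => v = s₁ u ∨ v = s₂ u ∨ v = s₃ u
    let orbit : K × K × K → Set (K × K × K) := fun u => {v | Relation.ReflTransGen step u v}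
    let S₀ : Set (K × K × K) := {v ∈ S | ‖v.1‖ ≤ 1 ∧ ‖v.2.1‖ ≤ 1 ∧ ‖v.2.2‖ ≤ 1}
    (∀ v ∈ S, (Bornology.IsBounded (orbit v) ↔ v ∈ S₀)) ∧
    IsCompact S₀ ∧
    (∀ v ∈ S₀, s₁ v ∈ S₀ ∧ s₂ v ∈ S₀ ∧ s₃ v ∈ S₀) ∧
    (∀ Cs : Set (K × K × K), Cs ⊆ S → IsCompact Cs →
      (∀ v ∈ Cs, s₁ v ∈ Cs ∧ s₂ v ∈ Cs ∧ s₃ v ∈ Cs) → Cs ⊆ S₀) := by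
  intro S s₁ s₂ s₃ step orbit S₀
  have hS₀inv : ∀ v ∈ S₀, s₁ v ∈ S₀ ∧ s₂ v ∈ S₀ ∧ s₃ v ∈ S₀ := by
    rintro ⟨x, y, z⟩ ⟨hveq, hx, hy, hz⟩
    have hveq' : x ^ 2 + y ^ 2 + z ^ 2 + x * y * z = A * x + B * y + C * z + D := hveq
    refine ⟨⟨?_, ?_, hy, hz⟩, ⟨?_, hx, ?_, hz⟩, ⟨?_, hx, hy, ?_⟩⟩
    · show (-x + A - y * z) ^ 2 + y ^ 2 + z ^ 2 + (-x + A - y * z) * y * z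
        = A * (-x + A - y * z) + B * y + C * z + D
      linear_combination hveq'
    · exact Stmt18Aux.int_bound hx hA hy hz
    · show x ^ 2 + (-y + B - z * x) ^ 2 + z ^ 2 + x * (-y + B - z * x) * z
        = A * x + B * (-y + B - z * x) + C * z + D
      linear_combination hveq'
    · exact Stmt18Aux.int_bound hy hB hz hx
    · show x ^ 2 + y ^ 2 + (-z + C - x * y) ^ 2 + x * y * (-z + C - x * y)
        = A * x + B * y + C * (-z + C - x * y) + D
      linear_combination hveq'
    · exact Stmt18Aux.int_bound hz hC hx hy
  have hS₀cpt : IsCompact S₀ := by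
    have hclosed : IsClosed S₀ := by
      have e : S₀ = (S ∩ {v : K × K × K | ‖v.1‖ ≤ 1}) ∩
          ({v : K × K × K | ‖v.2.1‖ ≤ 1} ∩ {v : K × K × K | ‖v.2.2‖ ≤ 1}) := by
        ext w
        simp only [S₀, Set.mem_setOf_eq, Set.mem_inter_iff]
        tauto
      rw [e]
      have hS : IsClosed S := isClosed_eq (by fun_prop) (by fun_prop)
      exact (hS.inter (isClosed_le (by fun_prop) continuous_const)).inter
        ((isClosed_le (by fun_prop) continuous_const).inter
          (isClosed_le (by fun_prop) continuous_const))
    have hsub : S₀ ⊆ Metric.closedBall 0 1 := by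
      rintro ⟨x, y, z⟩ ⟨-, hx, hy, hz⟩
      rw [mem_closedBall_zero_iff]
      exact max_le hx (max_le hy hz)
    exact (isCompact_closedBall (0 : K × K × K) 1).of_isClosed_subset hclosed hsub
  have horbsub : ∀ T : Set (K × K × K), (∀ v ∈ T, s₁ v ∈ T ∧ s₂ v ∈ T ∧ s₃ v ∈ T) →
      ∀ v ∈ T, orbit v ⊆ T := by
    intro T hT v hv w hw
    induction hw with
    | refl => exact hv
    | tail _ hst ih =>
      rcases hst with rfl | rfl | rfl
      · exact (hT _ ih).1
      · exact (hT _ ih).2.1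
      · exact (hT _ ih).2.2
  have hunb : ∀ v ∈ S, v ∉ S₀ → ¬ Bornology.IsBounded (orbit v) := by
    intro v hv hns hbd
    have hbig : 1 < ‖v.1‖ ∨ 1 < ‖v.2.1‖ ∨ 1 < ‖v.2.2‖ := by
      by_contra hc
      push_neg at hc
      exact hns ⟨hv, hc.1, hc.2.1, hc.2.2⟩
    obtain ⟨R, hR⟩ := isBounded_iff_forall_norm_le.mp hbd
    obtain ⟨w, hw, hr⟩ := Stmt18Aux.main A B C D hA hB hC hD v hv hbig R
    exact absurd (hR w hw) (not_le.mpr hr)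
  refine ⟨?_, hS₀cpt, hS₀inv, ?_⟩
  · intro v hv
    constructor
    · intro hbd
      by_contra hns
      exact hunb v hv hns hbd
    · intro hv0
      exact hS₀cpt.isBounded.subset (horbsub S₀ hS₀inv v hv0)
  · intro Cs hCsS hCscpt hCsinv w hw
    by_contra hns
    exact hunb w (hCsS hw) hns (hCscpt.isBounded.subset (horbsub Cs hCsinv w hw))
end
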